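/- Let G(t) = (1/2)(1 − |t|/π)·sin|t| for t ∈ [−π, π]. Let R : ℝ → ℝ be a continuous 2π-periodic function satisfying ∫₀^{2π} R(t) sin t dt = 0 and ∫₀^{2π} R(t) cos t dt = 0. Then the function h(θ) = ∫_{−π}^{π} G(t) R(θ + t) dt is 2π-periodic, satisfies h'' + h = R, and satisfies ∫₀^{2π} h(t) sin t dt = 0 and ∫₀^{2π} h(t) cos t dt = 0. -/

import Mathlib

open Real intervalIntegral MeasureTheory

noncomputable def stmtAA (R : ℝ → ℝ) (x : ℝ) : ℝ := ∫ s in (0:ℝ)..x, R s * Real.sin s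
noncomputable def stmtBB (R : ℝ → ℝ) (x : ℝ) : ℝ := ∫ s in (0:ℝ)..x, R s * Real.cos s
noncomputable def stmtCC (R : ℝ → ℝ) (x : ℝ) : ℝ := ∫ s in (0:ℝ)..x, s * R s * Real.sin s
noncomputable def stmtDD (R : ℝ → ℝ) (x : ℝ) : ℝ := ∫ s in (0:ℝ)..x, s * R s * Real.cos s
noncomputable def stmtPH (R : ℝ → ℝ) (x : ℝ) : ℝ :=
  stmtAA R (x - π) - stmtAA R x - (1/(2*π)) * (stmtCC R (x + π) - stmtCC R (x - π))
noncomputable def stmtPS (R : ℝ → ℝ) (x : ℝ) : ℝ :=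
  stmtBB R (x - π) - stmtBB R x - (1/(2*π)) * (stmtDD R (x + π) - stmtDD R (x - π))

lemma stmtAA_deriv (R : ℝ → ℝ) (hR : Continuous R) (x : ℝ) :
    HasDerivAt (stmtAA R) (R x * Real.sin x) x :=
  (Continuous.integral_hasStrictDerivAt (hR.mul Real.continuous_sin) 0 x).hasDerivAt

lemma stmtBB_deriv (R : ℝ → ℝ) (hR : Continuous R) (x : ℝ) :
    HasDerivAt (stmtBB R) (R x * Real.cos x) x :=
  (Continuous.integral_hasStrictDerivAt (hR.mul Real.continuous_cos) 0 x).hasDerivAt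

lemma stmtCC_deriv (R : ℝ → ℝ) (hR : Continuous R) (x : ℝ) :
    HasDerivAt (stmtCC R) (x * R x * Real.sin x) x :=
  (Continuous.integral_hasStrictDerivAt ((continuous_id.mul hR).mul Real.continuous_sin) 0 x).hasDerivAt

lemma stmtDD_deriv (R : ℝ → ℝ) (hR : Continuous R) (x : ℝ) :
    HasDerivAt (stmtDD R) (x * R x * Real.cos x) x :=
  (Continuous.integral_hasStrictDerivAt ((continuous_id.mul hR).mul Real.continuous_cos) 0 x).hasDerivAt

lemma stmtPH_deriv (R : ℝ → ℝ) (hR : Continuous R) (hRper : Function.Periodic R (2*π)) (x : ℝ) :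
    HasDerivAt (stmtPH R) (-(R x * Real.sin x)) x := by
  have h1 : HasDerivAt (fun t => stmtAA R (t - π)) (R (x-π) * Real.sin (x-π)) x := by
    refine ((stmtAA_deriv R hR (x - π)).comp x ((hasDerivAt_id x).sub_const π)).congr_deriv ?_ <;> simp
  have h2 : HasDerivAt (fun t => stmtCC R (t + π)) ((x+π) * R (x+π) * Real.sin (x+π)) x := by
    refine ((stmtCC_deriv R hR (x + π)).comp x ((hasDerivAt_id x).add_const π)).congr_deriv ?_ <;> simp
  have h3 : HasDerivAt (fun t => stmtCC R (t - π)) ((x-π) * R (x-π) * Real.sin (x-π)) x := by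
    refine ((stmtCC_deriv R hR (x - π)).comp x ((hasDerivAt_id x).sub_const π)).congr_deriv ?_ <;> simp
  have h4 := (h1.sub (stmtAA_deriv R hR x)).sub ((h2.sub h3).const_mul (1/(2*π)))
  refine h4.congr_deriv (Eq.symm ?_)
  have hper : R (x + π) = R (x - π) := by
    have := hRper (x - π); rw [show x - π + 2*π = x + π by ring] at this; exact this
  rw [hper, Real.sin_add_pi, Real.sin_sub_pi]
  have hπ : (π:ℝ) ≠ 0 := Real.pi_ne_zero
  field_simp
  ring

lemma stmtPS_deriv (R : ℝ → ℝ) (hR : Continuous R) (hRper : Function.Periodic R (2*π)) (x : ℝ) :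
    HasDerivAt (stmtPS R) (-(R x * Real.cos x)) x := by
  have h1 : HasDerivAt (fun t => stmtBB R (t - π)) (R (x-π) * Real.cos (x-π)) x := by
    refine ((stmtBB_deriv R hR (x - π)).comp x ((hasDerivAt_id x).sub_const π)).congr_deriv ?_ <;> simp
  have h2 : HasDerivAt (fun t => stmtDD R (t + π)) ((x+π) * R (x+π) * Real.cos (x+π)) x := by
    refine ((stmtDD_deriv R hR (x + π)).comp x ((hasDerivAt_id x).add_const π)).congr_deriv ?_ <;> simp
  have h3 : HasDerivAt (fun t => stmtDD R (t - π)) ((x-π) * R (x-π) * Real.cos (x-π)) x := by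
    refine ((stmtDD_deriv R hR (x - π)).comp x ((hasDerivAt_id x).sub_const π)).congr_deriv ?_ <;> simp
  have h4 := (h1.sub (stmtBB_deriv R hR x)).sub ((h2.sub h3).const_mul (1/(2*π)))
  refine h4.congr_deriv (Eq.symm ?_)
  have hper : R (x + π) = R (x - π) := by
    have := hRper (x - π); rw [show x - π + 2*π = x + π by ring] at this; exact this
  rw [hper, Real.cos_add_pi, Real.cos_sub_pi]
  have hπ : (π:ℝ) ≠ 0 := Real.pi_ne_zero
  field_simp
  ring

lemma stmt_inner (R : ℝ → ℝ) (hR : Continuous R) (hRper : Function.Periodic R (2*π))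
    (hRsin : ∫ t in (0:ℝ)..2*π, R t * Real.sin t = 0)
    (hRcos : ∫ t in (0:ℝ)..2*π, R t * Real.cos t = 0) (s : ℝ) :
    (∫ t in (0:ℝ)..2*π, R (t+s) * Real.sin t = 0) ∧
    (∫ t in (0:ℝ)..2*π, R (t+s) * Real.cos t = 0) := by
  have hiA : IntervalIntegrable (fun u => R u * Real.sin u) volume 0 (2*π) :=
    (hR.mul Real.continuous_sin).intervalIntegrable _ _
  have hiB : IntervalIntegrable (fun u => R u * Real.cos u) volume 0 (2*π) :=
    (hR.mul Real.continuous_cos).intervalIntegrable _ _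
  constructor
  · have hper : Function.Periodic (fun u => R u * Real.sin (u - s)) (2*π) := by
      intro u
      simp only [hRper u, show u + 2*π - s = (u - s) + 2*π by ring, Real.sin_add_two_pi]
    calc (∫ t in (0:ℝ)..2*π, R (t+s) * Real.sin t)
        = ∫ t in (0:ℝ)..2*π, (fun u => R u * Real.sin (u - s)) (t + s) := by
          refine intervalIntegral.integral_congr fun t _ => ?_
          simp
      _ = ∫ u in (0+s)..(2*π+s), R u * Real.sin (u - s) :=
          by exact intervalIntegral.integral_comp_add_right (fun u => R u * Real.sin (u - s)) s
      _ = ∫ u in s..(s+2*π), R u * Real.sin (u - s) := by rw [zero_add, add_comm (2*π) s]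
      _ = ∫ u in (0:ℝ)..(0+2*π), R u * Real.sin (u - s) := hper.intervalIntegral_add_eq s 0
      _ = ∫ u in (0:ℝ)..2*π, (Real.cos s * (R u * Real.sin u) - Real.sin s * (R u * Real.cos u)) := by
          rw [zero_add]
          exact intervalIntegral.integral_congr fun u _ => by rw [Real.sin_sub]; ring
      _ = Real.cos s * (∫ u in (0:ℝ)..2*π, R u * Real.sin u)
            - Real.sin s * (∫ u in (0:ℝ)..2*π, R u * Real.cos u) := by
          rw [intervalIntegral.integral_sub ((hiA).const_mul _) ((hiB).const_mul _),
            intervalIntegral.integral_const_mul, intervalIntegral.integral_const_mul]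
      _ = 0 := by rw [hRsin, hRcos]; ring
  · have hper : Function.Periodic (fun u => R u * Real.cos (u - s)) (2*π) := by
      intro u
      simp only [hRper u, show u + 2*π - s = (u - s) + 2*π by ring, Real.cos_add_two_pi]
    calc (∫ t in (0:ℝ)..2*π, R (t+s) * Real.cos t)
        = ∫ t in (0:ℝ)..2*π, (fun u => R u * Real.cos (u - s)) (t + s) := by
          refine intervalIntegral.integral_congr fun t _ => ?_
          simp
      _ = ∫ u in (0+s)..(2*π+s), R u * Real.cos (u - s) :=
          by exact intervalIntegral.integral_comp_add_right (fun u => R u * Real.cos (u - s)) s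
      _ = ∫ u in s..(s+2*π), R u * Real.cos (u - s) := by rw [zero_add, add_comm (2*π) s]
      _ = ∫ u in (0:ℝ)..(0+2*π), R u * Real.cos (u - s) := hper.intervalIntegral_add_eq s 0
      _ = ∫ u in (0:ℝ)..2*π, (Real.cos s * (R u * Real.cos u) + Real.sin s * (R u * Real.sin u)) := by
          rw [zero_add]
          exact intervalIntegral.integral_congr fun u _ => by rw [Real.cos_sub]; ring
      _ = Real.cos s * (∫ u in (0:ℝ)..2*π, R u * Real.cos u)
            + Real.sin s * (∫ u in (0:ℝ)..2*π, R u * Real.sin u) := by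
          rw [intervalIntegral.integral_add ((hiB).const_mul _) ((hiA).const_mul _),
            intervalIntegral.integral_const_mul, intervalIntegral.integral_const_mul]
      _ = 0 := by rw [hRsin, hRcos]; ring

lemma stmt_fub (R : ℝ → ℝ) (hR : Continuous R) (φ : ℝ → ℝ) (hφ : Continuous φ)
    (G : ℝ → ℝ) (hGc : Continuous G)
    (hinner : ∀ s, (∫ t in (0:ℝ)..2*π, R (t+s) * φ t) = 0) :
    (∫ t in (0:ℝ)..2*π, (∫ s in (-π)..π, G s * R (t + s)) * φ t) = 0 := by
  have hπ := Real.pi_pos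
  have h2π : (0:ℝ) ≤ 2*π := by positivity
  have hππ : (-π:ℝ) ≤ π := by linarith
  have hpt : ∀ t ∈ Set.uIcc (0:ℝ) (2*π), (∫ s in (-π)..π, G s * R (t + s)) * φ t
      = ∫ s in (-π)..π, G s * R (t + s) * φ t := fun t _ => by
    rw [← intervalIntegral.integral_mul_const]
  rw [intervalIntegral.integral_congr hpt, intervalIntegral.integral_of_le h2π]
  have hpt2 : ∀ t, (∫ s in (-π)..π, G s * R (t + s) * φ t)
      = ∫ s in Set.Ioc (-π) π, G s * R (t + s) * φ t := fun t =>
    intervalIntegral.integral_of_le hππ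
  simp only [hpt2]
  have hc : Continuous (Function.uncurry fun t s => G s * R (t + s) * φ t) := by
    apply Continuous.mul
    apply Continuous.mul
    · exact hGc.comp continuous_snd
    · exact hR.comp (continuous_fst.add continuous_snd)
    · exact hφ.comp continuous_fst
  have hart : Integrable (Function.uncurry fun t s => G s * R (t + s) * φ t)
      ((volume.restrict (Set.Ioc (0:ℝ) (2*π))).prod (volume.restrict (Set.Ioc (-π) π))) := by
    rw [Measure.prod_restrict]
    have hsub : Set.Ioc (0:ℝ) (2*π) ×ˢ Set.Ioc (-π) π ⊆ Set.Icc (0:ℝ) (2*π) ×ˢ Set.Icc (-π) π :=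
      Set.prod_mono Set.Ioc_subset_Icc_self Set.Ioc_subset_Icc_self
    refine IntegrableOn.mono_set ?_ hsub
    exact hc.continuousOn.integrableOn_compact (isCompact_Icc.prod isCompact_Icc)
  rw [MeasureTheory.integral_integral_swap hart]
  have inner0 : ∀ s, (∫ t in Set.Ioc (0:ℝ) (2*π), G s * R (t + s) * φ t) = 0 := fun s => by
    rw [← intervalIntegral.integral_of_le h2π]
    have : (∫ t in (0:ℝ)..2*π, G s * R (t + s) * φ t)
        = G s * ∫ t in (0:ℝ)..2*π, R (t + s) * φ t := by
      rw [← intervalIntegral.integral_const_mul]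
      exact intervalIntegral.integral_congr fun t _ => by ring
    rw [this, hinner s, mul_zero]
  simp only [inner0, MeasureTheory.integral_zero]

lemma stmt_key (R : ℝ → ℝ) (hR : Continuous R) (hRper : Function.Periodic R (2*π))
    (hRsin : ∫ t in (0:ℝ)..2*π, R t * Real.sin t = 0)
    (hRcos : ∫ t in (0:ℝ)..2*π, R t * Real.cos t = 0) (θ : ℝ) :
    (∫ t in (-π)..π, ((1/2) * (1 - |t|/π) * Real.sin |t|) * R (θ + t))
      = Real.cos θ * stmtPH R θ - Real.sin θ * stmtPS R θ := by
  have hπ : (0:ℝ) < π := Real.pi_pos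
  have hπ0 : (π:ℝ) ≠ 0 := Real.pi_ne_zero
  set F : ℝ → ℝ := fun s => (1/2) * (1 - |s - θ|/π) * Real.sin |s - θ| * R s with hF
  have hFc : Continuous F := by
    apply Continuous.mul ?_ hR
    apply Continuous.mul
    · exact continuous_const.mul (continuous_const.sub
        (((continuous_id.sub continuous_const).abs).div_const π))
    · exact Real.continuous_sin.comp ((continuous_id.sub continuous_const).abs)
  have cA : Continuous fun s : ℝ => R s * Real.sin s := hR.mul Real.continuous_sin
  have cB : Continuous fun s : ℝ => R s * Real.cos s := hR.mul Real.continuous_cos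
  have cC : Continuous fun s : ℝ => s * R s * Real.sin s :=
    (continuous_id.mul hR).mul Real.continuous_sin
  have cD : Continuous fun s : ℝ => s * R s * Real.cos s :=
    (continuous_id.mul hR).mul Real.continuous_cos
  have ia : ∀ p q : ℝ, IntervalIntegrable (fun s => R s * Real.sin s) volume p q :=
    fun p q => cA.intervalIntegrable p q
  have ib : ∀ p q : ℝ, IntervalIntegrable (fun s => R s * Real.cos s) volume p q :=
    fun p q => cB.intervalIntegrable p q
  have ic : ∀ p q : ℝ, IntervalIntegrable (fun s => s * R s * Real.sin s) volume p q :=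
    fun p q => cC.intervalIntegrable p q
  have id' : ∀ p q : ℝ, IntervalIntegrable (fun s => s * R s * Real.cos s) volume p q :=
    fun p q => cD.intervalIntegrable p q
  -- generic splitting lemma
  have hsplit : ∀ c1 c2 c3 c4 p q : ℝ,
      (∫ s in p..q, (c1 * (R s * Real.sin s) + c2 * (R s * Real.cos s)
        + c3 * (s * R s * Real.sin s) + c4 * (s * R s * Real.cos s)))
      = c1 * (stmtAA R q - stmtAA R p) + c2 * (stmtBB R q - stmtBB R p)
        + c3 * (stmtCC R q - stmtCC R p) + c4 * (stmtDD R q - stmtDD R p) := by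
    intro c1 c2 c3 c4 p q
    rw [intervalIntegral.integral_add (((ia p q).const_mul c1).add ((ib p q).const_mul c2) |>.add
          ((ic p q).const_mul c3)) ((id' p q).const_mul c4),
        intervalIntegral.integral_add (((ia p q).const_mul c1).add ((ib p q).const_mul c2))
          ((ic p q).const_mul c3),
        intervalIntegral.integral_add ((ia p q).const_mul c1) ((ib p q).const_mul c2),
        intervalIntegral.integral_const_mul, intervalIntegral.integral_const_mul,
        intervalIntegral.integral_const_mul, intervalIntegral.integral_const_mul]
    simp only [stmtAA, stmtBB, stmtCC, stmtDD]
    rw [← intervalIntegral.integral_interval_sub_left (ia 0 q) (ia 0 p),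
        ← intervalIntegral.integral_interval_sub_left (ib 0 q) (ib 0 p),
        ← intervalIntegral.integral_interval_sub_left (ic 0 q) (ic 0 p),
        ← intervalIntegral.integral_interval_sub_left (id' 0 q) (id' 0 p)]
  -- step 1 : substitution and splitting
  have step1 : (∫ t in (-π)..π, ((1/2) * (1 - |t|/π) * Real.sin |t|) * R (θ + t))
      = (∫ s in (-π+θ)..θ, F s) + ∫ s in θ..(π+θ), F s := by
    calc (∫ t in (-π)..π, ((1/2) * (1 - |t|/π) * Real.sin |t|) * R (θ + t))
        = ∫ t in (-π)..π, F (t + θ) := by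
          refine intervalIntegral.integral_congr fun t _ => ?_
          simp only [hF, add_sub_cancel_right]
          rw [add_comm θ t]
      _ = ∫ s in (-π+θ)..(π+θ), F s := by
          exact intervalIntegral.integral_comp_add_right F θ
      _ = (∫ s in (-π+θ)..θ, F s) + ∫ s in θ..(π+θ), F s :=
          (intervalIntegral.integral_add_adjacent_intervals
            (hFc.intervalIntegrable _ _) (hFc.intervalIntegrable _ _)).symm
  -- left piece
  have hleft : (∫ s in (-π+θ)..θ, F s)
      = (-((1/2)*(1-θ/π)*Real.cos θ)) * (stmtAA R θ - stmtAA R (θ-π))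
        + ((1/2)*(1-θ/π)*Real.sin θ) * (stmtBB R θ - stmtBB R (θ-π))
        + (-((1/(2*π))*Real.cos θ)) * (stmtCC R θ - stmtCC R (θ-π))
        + ((1/(2*π))*Real.sin θ) * (stmtDD R θ - stmtDD R (θ-π)) := by
    rw [show -π+θ = θ-π by ring, ← hsplit]
    refine intervalIntegral.integral_congr fun s hs => ?_
    rw [Set.uIcc_of_le (by linarith)] at hs
    have h1 : s - θ ≤ 0 := by linarith [hs.2]
    simp only [hF]
    rw [abs_of_nonpos h1, show -(s-θ) = θ - s by ring, Real.sin_sub]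
    field_simp
    ring
  -- right piece
  have hright : (∫ s in θ..(π+θ), F s)
      = ((1/2)*(1+θ/π)*Real.cos θ) * (stmtAA R (θ+π) - stmtAA R θ)
        + (-((1/2)*(1+θ/π)*Real.sin θ)) * (stmtBB R (θ+π) - stmtBB R θ)
        + (-((1/(2*π))*Real.cos θ)) * (stmtCC R (θ+π) - stmtCC R θ)
        + ((1/(2*π))*Real.sin θ) * (stmtDD R (θ+π) - stmtDD R θ) := by
    rw [show π+θ = θ+π by ring, ← hsplit]
    refine intervalIntegral.integral_congr fun s hs => ?_
    rw [Set.uIcc_of_le (by linarith)] at hs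
    have h1 : 0 ≤ s - θ := by linarith [hs.1]
    simp only [hF]
    rw [abs_of_nonneg h1, Real.sin_sub]
    field_simp
    ring
  -- orthogonality shift identities
  have hshift : ∀ f : ℝ → ℝ, (∀ p q, IntervalIntegrable f volume p q) →
      Function.Periodic f (2*π) → (∫ s in (0:ℝ)..2*π, f s) = 0 →
      (∫ s in (0:ℝ)..(θ+π), f s) = ∫ s in (0:ℝ)..(θ-π), f s := by
    intro f hint hper h0
    have h1 : (∫ s in (θ-π)..(θ+π), f s) = 0 := by
      calc (∫ s in (θ-π)..(θ+π), f s) = ∫ s in (θ-π)..((θ-π)+2*π), f s := by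
            rw [show (θ-π)+2*π = θ+π by ring]
        _ = ∫ s in (0:ℝ)..(0+2*π), f s := hper.intervalIntegral_add_eq (θ-π) 0
        _ = 0 := by rw [zero_add]; exact h0
    have h2 := intervalIntegral.integral_interval_sub_left (hint 0 (θ+π)) (hint 0 (θ-π))
    linarith [h2.trans h1]
  have hAper : stmtAA R (θ+π) = stmtAA R (θ-π) := by
    simp only [stmtAA]
    exact hshift _ ia (fun s => by rw [hRper s, Real.sin_add_two_pi]) hRsin
  have hBper : stmtBB R (θ+π) = stmtBB R (θ-π) := by
    simp only [stmtBB]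
    exact hshift _ ib (fun s => by rw [hRper s, Real.cos_add_two_pi]) hRcos
  rw [step1, hleft, hright, hAper, hBper]
  simp only [stmtPH, stmtPS]
  field_simp
  ring

/-- The Green function solution of `h'' + h = R` for `2π`-periodic data orthogonal
to sine and cosine. -/
theorem stmt_5 (R : ℝ → ℝ) (hRcont : Continuous R) (hRper : Function.Periodic R (2*π))
    (hRsin : ∫ t in (0:ℝ)..2*π, R t * Real.sin t = 0)
    (hRcos : ∫ t in (0:ℝ)..2*π, R t * Real.cos t = 0)
    (G : ℝ → ℝ) (hG : ∀ t, G t = (1/2) * (1 - |t|/π) * Real.sin |t|)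
    (h : ℝ → ℝ) (hh : ∀ θ, h θ = ∫ t in (-π)..π, G t * R (θ + t)) :
    Function.Periodic h (2*π) ∧
    (∀ θ, deriv (deriv h) θ + h θ = R θ) ∧
    (∫ t in (0:ℝ)..2*π, h t * Real.sin t = 0) ∧
    (∫ t in (0:ℝ)..2*π, h t * Real.cos t = 0) := by
  have hGc : Continuous G := by
    have : G = fun t => (1/2) * (1 - |t|/π) * Real.sin |t| := funext hG
    rw [this]
    apply Continuous.mul
    · exact continuous_const.mul (continuous_const.sub (continuous_abs.div_const π))
    · exact Real.continuous_sin.comp continuous_abs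
  have hkey : ∀ θ, h θ = Real.cos θ * stmtPH R θ - Real.sin θ * stmtPS R θ := fun θ => by
    rw [hh]
    simp only [hG]
    exact stmt_key R hRcont hRper hRsin hRcos θ
  have hheq : h = fun θ => Real.cos θ * stmtPH R θ - Real.sin θ * stmtPS R θ := funext hkey
  refine ⟨?_, ?_, ?_, ?_⟩
  · -- periodicity
    intro θ
    rw [hh, hh]
    refine intervalIntegral.integral_congr fun t _ => ?_
    rw [show θ + 2*π + t = θ + t + 2*π by ring, hRper]
  · -- the ODE
    intro θ
    have hd1 : ∀ x, HasDerivAt h (-(Real.sin x * stmtPH R x) - Real.cos x * stmtPS R x) x := by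
      intro x
      rw [hheq]
      have h1 := (Real.hasDerivAt_cos x).mul (stmtPH_deriv R hRcont hRper x)
      have h2 := (Real.hasDerivAt_sin x).mul (stmtPS_deriv R hRcont hRper x)
      refine (h1.sub h2).congr_deriv (Eq.symm ?_)
      ring
    have hderiv : deriv h = fun x => -(Real.sin x * stmtPH R x) - Real.cos x * stmtPS R x :=
      funext fun x => (hd1 x).deriv
    have hd2 : HasDerivAt (deriv h) (R θ - h θ) θ := by
      rw [hderiv]
      have h1 := ((Real.hasDerivAt_sin θ).mul (stmtPH_deriv R hRcont hRper θ)).neg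
      have h2 := (Real.hasDerivAt_cos θ).mul (stmtPS_deriv R hRcont hRper θ)
      refine (h1.sub h2).congr_deriv (Eq.symm ?_)
      rw [hkey θ]
      linear_combination (-(R θ)) * (Real.sin_sq_add_cos_sq θ)
    rw [hd2.deriv]
    ring
  · -- orthogonality to sin
    have : (∫ t in (0:ℝ)..2*π, h t * Real.sin t)
        = ∫ t in (0:ℝ)..2*π, (∫ s in (-π)..π, G s * R (t + s)) * Real.sin t :=
      intervalIntegral.integral_congr fun t _ => by rw [hh]
    rw [this]
    exact stmt_fub R hRcont Real.sin Real.continuous_sin G hGc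
      (fun s => (stmt_inner R hRcont hRper hRsin hRcos s).1)
  · -- orthogonality to cos
    have : (∫ t in (0:ℝ)..2*π, h t * Real.cos t)
        = ∫ t in (0:ℝ)..2*π, (∫ s in (-π)..π, G s * R (t + s)) * Real.cos t :=
      intervalIntegral.integral_congr fun t _ => by rw [hh]
    rw [this]
    exact stmt_fub R hRcont Real.cos Real.continuous_cos G hGc
      (fun s => (stmt_inner R hRcont hRper hRsin hRcos s).2)
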